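/- Let k be a field of characteristic 0 and F ∈ k[X_0,…,X_n] homogeneous of degree m ≥ 2. Let M be the (n+2)×(n+2) matrix with first row (F, Y_0F_0, …, Y_0F_n) and (i+2)-nd row (X_iF_i, Y_0X_iF_{i0}, …, Y_0(F_i + X_iF_{ii}), …, Y_0X_iF_{in}) for 0 ≤ i ≤ n (the diagonal entry in column i+2 being Y_0(F_i + X_iF_{ii})). Then in the ring J̃ = k[Y_0,X_0,…,X_n]/(Y_0F, Y_0X_0F_0,…,Y_0X_nF_n), the minor det(M_{0|0}) (delete row 0 and column 0) equals Y_0^{n+1}·(m^{n+1}/(m−1)^{n+1})·det(Hess(F))·∏_{i=0}^n X_i. -/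

import Mathlib

open MvPolynomial

namespace HessianRing

variable {k : Type*} [Field k]

/-- The variable `Y_0`. -/
noncomputable def Y0 (n : ℕ) (k : Type*) [Field k] :
    MvPolynomial (Unit ⊕ Fin (n + 1)) k := X (Sum.inl ())

/-- The variable `X_j`. -/
noncomputable def Xb (n : ℕ) (k : Type*) [Field k] (j : Fin (n + 1)) :
    MvPolynomial (Unit ⊕ Fin (n + 1)) k := X (Sum.inr j)

/-- The inclusion `k[X_0,…,X_n] → k[Y_0,X_0,…,X_n]`. -/
noncomputable def ρ (n : ℕ) (k : Type*) [Field k] :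
    MvPolynomial (Fin (n + 1)) k →ₐ[k] MvPolynomial (Unit ⊕ Fin (n + 1)) k :=
  rename Sum.inr

/-- The ideal `(Y_0F, Y_0X_0F_0, …, Y_0X_nF_n)` defining
`J̃ = k[Y_0,X_0,…,X_n]/(Y_0F, Y_0X_0F_0,…,Y_0X_nF_n)`. -/
noncomputable def JtildeIdeal (n : ℕ) {k : Type*} [Field k]
    (F : MvPolynomial (Fin (n + 1)) k) : Ideal (MvPolynomial (Unit ⊕ Fin (n + 1)) k) :=
  Ideal.span ({Y0 n k * ρ n k F} ∪
    Set.range (fun i : Fin (n + 1) => Y0 n k * Xb n k i * ρ n k (pderiv i F)))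

/-- The Hessian matrix `(∂²F/∂X_i∂X_j)` of `F`. -/
noncomputable def hess (n : ℕ) {k : Type*} [Field k] (F : MvPolynomial (Fin (n + 1)) k) :
    Matrix (Fin (n + 1)) (Fin (n + 1)) (MvPolynomial (Fin (n + 1)) k) :=
  Matrix.of fun i j => pderiv j (pderiv i F)

section Aux
variable {σ : Type*} [Fintype σ] [DecidableEq σ] {R : Type*} [CommRing R]
set_option linter.unusedSectionVars false

lemma degree_add' (a b : σ →₀ ℕ) : (a + b).degree = a.degree + b.degree := by
  have := Finsupp.degree_eq_weight_one (σ := σ) (R := ℕ)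
  simp only [this]
  exact map_add _ a b

lemma degree_single' (i : σ) : (Finsupp.single i 1).degree = 1 := by
  exact Finsupp.degree_single i 1

lemma X_mul_pderiv_monomial (i : σ) (d : σ →₀ ℕ) (c : R) :
    X i * pderiv i (monomial d c) = monomial d (c * d i) := by
  rw [pderiv_monomial]
  by_cases h0 : d i = 0
  · simp [h0]
  · have hle : Finsupp.single i 1 ≤ d := by
      rw [Finsupp.single_le_iff]; omega
    rw [show (X i : MvPolynomial σ R) = monomial (Finsupp.single i 1) 1 from rfl,
      monomial_mul, one_mul, add_tsub_cancel_of_le hle]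

lemma euler_monomial {m : ℕ} (d : σ →₀ ℕ) (c : R) (hd : d.degree = m) :
    ∑ i, X i * pderiv i (monomial d c) = (m : MvPolynomial σ R) * monomial d c := by
  simp only [X_mul_pderiv_monomial]
  have : ∑ i, monomial d (c * d i) = monomial d (c * ∑ i, (d i : R)) := by
    rw [Finset.mul_sum, map_sum]
  rw [this]
  have hsum : (∑ i, (d i : R)) = (m : R) := by
    rw [← Nat.cast_sum]
    congr 1
    rw [← hd, Finsupp.degree]
    exact (Finset.sum_subset (Finset.subset_univ _) (by
      intro x _ hx
      simpa using Finsupp.notMem_support_iff.mp hx)).symm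
  rw [hsum, show (m : MvPolynomial σ R) = C (m : R) by simp, C_mul_monomial, mul_comm c]

lemma euler' {m : ℕ} {F : MvPolynomial σ R} (h : F.IsHomogeneous m) :
    ∑ i, X i * pderiv i F = (m : MvPolynomial σ R) * F := by
  conv_lhs => rw [← support_sum_monomial_coeff F]
  conv_rhs => rw [← support_sum_monomial_coeff F]
  rw [Finset.mul_sum]
  simp only [map_sum, Finset.mul_sum]
  rw [Finset.sum_comm]
  refine Finset.sum_congr rfl fun d hd => ?_
  exact euler_monomial d _ (by
    by_contra hne
    exact (mem_support_iff.mp hd) (h.coeff_eq_zero hne))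

lemma pderiv_isHomogeneous' {m : ℕ} {F : MvPolynomial σ R} (h : F.IsHomogeneous m) (i : σ) :
    (pderiv i F).IsHomogeneous (m - 1) := by
  conv => enter [1]; rw [← support_sum_monomial_coeff F]
  rw [map_sum]
  refine MvPolynomial.IsHomogeneous.sum _ _ _ fun d hd => ?_
  rw [pderiv_monomial]
  by_cases h0 : d i = 0
  · simp only [h0, Nat.cast_zero, mul_zero, map_zero]
    exact isHomogeneous_zero _ _ _
  · refine isHomogeneous_monomial _ ?_
    have hle : Finsupp.single i 1 ≤ d := by rw [Finsupp.single_le_iff]; omega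
    have hdeg : d.degree = m := by
      by_contra hne
      exact (mem_support_iff.mp hd) (h.coeff_eq_zero hne)
    have := degree_add' (d - Finsupp.single i 1) (Finsupp.single i 1)
    rw [tsub_add_cancel_of_le hle, hdeg, degree_single'] at this
    omega

end Aux

section Main
open Matrix

variable (n : ℕ) {k : Type*} [Field k] (F : MvPolynomial (Fin (n + 1)) k)

/-- `f i = ρ(F_i)`. -/
noncomputable def ff (i : Fin (n + 1)) : MvPolynomial (Unit ⊕ Fin (n + 1)) k :=
  ρ n k (pderiv i F)

/-- Row `i` of the (renamed) Hessian. -/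
noncomputable def Hrow (i : Fin (n + 1)) : Fin (n + 1) → MvPolynomial (Unit ⊕ Fin (n + 1)) k :=
  fun j => ρ n k (pderiv j (pderiv i F))

/-- Matrix with rows `e_i` for `i ∈ s` and Hessian rows for `i ∉ s`. -/
noncomputable def Gm (s : Finset (Fin (n + 1))) :
    Matrix (Fin (n + 1)) (Fin (n + 1)) (MvPolynomial (Unit ⊕ Fin (n + 1)) k) :=
  fun i => if i ∈ s then Pi.single i 1 else Hrow n F i

variable {m : ℕ}

lemma euler_big (hm : 1 ≤ m) (hhom : F.IsHomogeneous m) (i : Fin (n + 1)) :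
    ∑ j, Hrow n F i j * Xb n k j = C ((m : k) - 1) * ff n F i := by
  have h1 := euler' (pderiv_isHomogeneous' hhom i)
  have h2 := congrArg (ρ n k) h1
  rw [map_sum, _root_.map_mul] at h2
  calc ∑ j, Hrow n F i j * Xb n k j
      = ∑ j, ρ n k (X j * pderiv j (pderiv i F)) := by
        refine Finset.sum_congr rfl fun j _ => ?_
        rw [_root_.map_mul, mul_comm]
        simp [Xb, Hrow, ρ, rename_X]
    _ = ρ n k ((m - 1 : ℕ) : MvPolynomial (Fin (n + 1)) k) * ρ n k (pderiv i F) := h2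
    _ = C ((m : k) - 1) * ff n F i := by
        rw [map_natCast]
        congr 1
        have : ((m - 1 : ℕ) : MvPolynomial (Unit ⊕ Fin (n + 1)) k)
            = C ((m - 1 : ℕ) : k) := by simp
        rw [this, Nat.cast_sub hm, Nat.cast_one]

lemma Gm_mulVec (hm : 1 ≤ m) (hhom : F.IsHomogeneous m) (s : Finset (Fin (n + 1))) :
    Gm n F s *ᵥ Xb n k =
      fun j => if j ∈ s then Xb n k j else C ((m : k) - 1) * ff n F j := by
  funext j
  simp only [Matrix.mulVec, dotProduct, Gm]
  by_cases hj : j ∈ s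
  · simp [hj, Pi.single_apply, ite_mul, Finset.sum_ite_eq']
  · simp only [hj, if_false]
    exact euler_big n F hm hhom j


lemma adj_diag (s : Finset (Fin (n + 1))) {a : Fin (n + 1)} :
    (Gm n F s).adjugate a a = (Gm n F (insert a s)).det := by
  rw [Matrix.adjugate_apply]
  congr 1
  funext i
  by_cases hia : i = a
  · subst hia
    rw [Matrix.updateRow_self]
    simp [Gm]
  · rw [Matrix.updateRow_ne hia]
    simp only [Gm, Finset.mem_insert, hia, false_or]

lemma keyA (hm : 1 ≤ m) (hhom : F.IsHomogeneous m) {s : Finset (Fin (n + 1))}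
    {a : Fin (n + 1)} (ha : a ∉ s) :
    (Gm n F s).det * Xb n k a
      = C ((m : k) - 1) * ff n F a * (Gm n F (insert a s)).det
        + ∑ j ∈ Finset.univ.erase a, (Gm n F s).adjugate a j *
            (if j ∈ s then Xb n k j else C ((m : k) - 1) * ff n F j) := by
  have h1 : (Gm n F s).adjugate *ᵥ (Gm n F s *ᵥ Xb n k) = (Gm n F s).det • Xb n k := by
    rw [Matrix.mulVec_mulVec, Matrix.adjugate_mul, Matrix.smul_mulVec,
      Matrix.one_mulVec]
  have h2 := congrFun h1 a
  rw [Gm_mulVec n F hm hhom s] at h2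
  simp only [Matrix.mulVec, dotProduct, Pi.smul_apply, smul_eq_mul] at h2
  rw [← Finset.add_sum_erase _ _ (Finset.mem_univ a), if_neg ha, adj_diag] at h2
  rw [← h2]
  ring

noncomputable def Tt (s : Finset (Fin (n + 1))) : MvPolynomial (Unit ⊕ Fin (n + 1)) k :=
  Y0 n k ^ (n + 1) * (∏ i ∈ s, ff n F i) * (∏ i ∈ sᶜ, Xb n k i) * (Gm n F s).det

lemma gen_mem (j : Fin (n + 1)) : Y0 n k * Xb n k j * ff n F j ∈ JtildeIdeal n F :=
  Ideal.subset_span (Set.mem_union_right _ ⟨j, rfl⟩)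

lemma step_mem (hm : 2 ≤ m) (hhom : F.IsHomogeneous m) {s : Finset (Fin (n + 1))}
    {a : Fin (n + 1)} (ha : a ∉ s) :
    C ((m : k) - 1) * Tt n F (insert a s) - Tt n F s ∈ JtildeIdeal n F := by
  have hmv := keyA n F (le_trans one_le_two hm) hhom ha
  have hprodf : ∏ i ∈ insert a s, ff n F i = ff n F a * ∏ i ∈ s, ff n F i :=
    Finset.prod_insert ha
  have hmemc : a ∈ sᶜ := Finset.mem_compl.mpr ha
  have hprodx : ∏ i ∈ sᶜ, Xb n k i = Xb n k a * ∏ i ∈ (insert a s)ᶜ, Xb n k i := by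
    rw [Finset.compl_insert]
    exact (Finset.mul_prod_erase _ _ hmemc).symm
  have key : C ((m : k) - 1) * Tt n F (insert a s) - Tt n F s
      = - (Y0 n k ^ (n + 1) * (∏ i ∈ s, ff n F i) * (∏ i ∈ (insert a s)ᶜ, Xb n k i) *
          ∑ j ∈ Finset.univ.erase a, (Gm n F s).adjugate a j *
            (if j ∈ s then Xb n k j else C ((m : k) - 1) * ff n F j)) := by
    rw [Tt, Tt, hprodf, hprodx]
    linear_combination (-(Y0 n k ^ (n + 1)) * (∏ i ∈ s, ff n F i) *
      (∏ i ∈ (insert a s)ᶜ, Xb n k i)) * hmv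
  rw [key, Finset.mul_sum]
  refine neg_mem (Ideal.sum_mem _ fun j hj => ?_)
  have hja : j ≠ a := (Finset.mem_erase.mp hj).1
  by_cases hjs : j ∈ s
  · rw [if_pos hjs, ← Finset.mul_prod_erase _ _ hjs]
    have heq : Y0 n k ^ (n + 1) * (ff n F j * ∏ i ∈ s.erase j, ff n F i) *
          (∏ i ∈ (insert a s)ᶜ, Xb n k i) * ((Gm n F s).adjugate a j * Xb n k j)
        = (Y0 n k ^ n * (∏ i ∈ s.erase j, ff n F i) * (∏ i ∈ (insert a s)ᶜ, Xb n k i) *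
            (Gm n F s).adjugate a j) * (Y0 n k * Xb n k j * ff n F j) := by ring
    rw [heq]
    exact Ideal.mul_mem_left _ _ (gen_mem n F j)
  · have hjc : j ∈ (insert a s)ᶜ := by
      simp [Finset.mem_compl, Finset.mem_insert, hja, hjs]
    rw [if_neg hjs, ← Finset.mul_prod_erase _ _ hjc]
    have heq : Y0 n k ^ (n + 1) * (∏ i ∈ s, ff n F i) *
          (Xb n k j * ∏ i ∈ ((insert a s)ᶜ).erase j, Xb n k i) *
          ((Gm n F s).adjugate a j * (C ((m : k) - 1) * ff n F j))
        = (Y0 n k ^ n * (∏ i ∈ s, ff n F i) * (∏ i ∈ ((insert a s)ᶜ).erase j, Xb n k i) *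
            (Gm n F s).adjugate a j * C ((m : k) - 1)) * (Y0 n k * Xb n k j * ff n F j) := by
      ring
    rw [heq]
    exact Ideal.mul_mem_left _ _ (gen_mem n F j)

lemma quot_ind (hm : 2 ≤ m) (hhom : F.IsHomogeneous m) (s : Finset (Fin (n + 1))) :
    Ideal.Quotient.mk (JtildeIdeal n F) (C ((m : k) - 1) ^ s.card * Tt n F s)
      = Ideal.Quotient.mk (JtildeIdeal n F) (Tt n F ∅) := by
  classical
  induction s using Finset.induction_on with
  | empty => simp
  | @insert a s ha ih =>
    have hstep : Ideal.Quotient.mk (JtildeIdeal n F) (C ((m : k) - 1) * Tt n F (insert a s))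
        = Ideal.Quotient.mk (JtildeIdeal n F) (Tt n F s) :=
      (Ideal.Quotient.mk_eq_mk_iff_sub_mem _ _).mpr (step_mem n F hm hhom ha)
    rw [Finset.card_insert_of_notMem ha, pow_succ,
      show C ((m:k)-1) ^ s.card * C ((m:k)-1) * Tt n F (insert a s)
        = (C ((m:k)-1) * Tt n F (insert a s)) * C ((m:k)-1) ^ s.card by ring,
      _root_.map_mul, hstep, ← _root_.map_mul, mul_comm (Tt n F s), ih]

end Main

/-- In `J̃ = k[Y_0,X_0,…,X_n]/(Y_0F, Y_0X_0F_0,…,Y_0X_nF_n)` (char 0, `F` homogeneous of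
degree `m ≥ 2`), the minor `det(M_{0|0})`, i.e. the determinant of the matrix with entries
`A_{ij} = Y_0·(X_iF_{ij} + δ_{ij}F_i)`, equals
`Y_0^{n+1}·(m^{n+1}/(m−1)^{n+1})·det(Hess(F))·∏_i X_i`. -/
theorem minor_det_eq_hessian (n m : ℕ) [CharZero k] (hm : 2 ≤ m)
    (F : MvPolynomial (Fin (n + 1)) k) (hhom : F.IsHomogeneous m)
    (A : Matrix (Fin (n + 1)) (Fin (n + 1)) (MvPolynomial (Unit ⊕ Fin (n + 1)) k))
    (hA : ∀ i j, A i j = Y0 n k * (Xb n k i * ρ n k (pderiv j (pderiv i F)) +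
      if i = j then ρ n k (pderiv i F) else 0)) :
    Ideal.Quotient.mk (JtildeIdeal n F) A.det =
      Ideal.Quotient.mk (JtildeIdeal n F)
        (C ((m : k) ^ (n + 1) * (((m : k) - 1)⁻¹) ^ (n + 1)) * Y0 n k ^ (n + 1) *
          ρ n k (hess n F).det * ∏ i, Xb n k i) := by
  classical
  have hmk : (m : k) - 1 ≠ 0 := by
    have h1 : (m : k) ≠ 1 := by
      intro h
      have h2 : ((m : ℕ) : k) = ((1 : ℕ) : k) := by simpa using h
      have := Nat.cast_injective h2
      omega
    intro h
    exact h1 (sub_eq_zero.mp h)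
  set B : Matrix (Fin (n + 1)) (Fin (n + 1)) (MvPolynomial (Unit ⊕ Fin (n + 1)) k) :=
    fun i => ff n F i • (Pi.single i 1 : Fin (n + 1) → MvPolynomial (Unit ⊕ Fin (n + 1)) k)
      + Xb n k i • Hrow n F i with hBdef
  have hAB : A = Y0 n k • B := by
    ext i j : 1
    rw [hA i j, Matrix.smul_apply]
    simp only [hBdef, Matrix.smul_apply, Pi.add_apply, Pi.smul_apply, smul_eq_mul,
      Pi.single_apply]
    by_cases hij : i = j
    · subst hij; simp [ff, Hrow]; ring_nf; simp
    · simp [hij, Ne.symm hij, ff, Hrow]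
  have hdetA : A.det = Y0 n k ^ (n + 1) * B.det := by
    rw [hAB, Matrix.det_smul]
    simp
  have hdetB : B.det = ∑ s : Finset (Fin (n + 1)),
      ((∏ i ∈ s, ff n F i) * ∏ i ∈ sᶜ, Xb n k i) * (Gm n F s).det := by
    have h0 : B.det = Matrix.detRowAlternating.toMultilinearMap
        ((fun i => ff n F i • (Pi.single i 1 : Fin (n + 1) →
            MvPolynomial (Unit ⊕ Fin (n + 1)) k)) + fun i => Xb n k i • Hrow n F i) := rfl
    rw [h0, MultilinearMap.map_add_univ]
    refine Finset.sum_congr rfl fun s _ => ?_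
    have hpiece : s.piecewise (fun i => ff n F i • (Pi.single i 1 : Fin (n + 1) →
            MvPolynomial (Unit ⊕ Fin (n + 1)) k))
          (fun i => Xb n k i • Hrow n F i)
        = fun i => (if i ∈ s then ff n F i else Xb n k i) • Gm n F s i := by
      funext i
      by_cases hi : i ∈ s
      · rw [Finset.piecewise_eq_of_mem _ _ _ hi]
        simp [hi, Gm]
      · rw [Finset.piecewise_eq_of_notMem _ _ _ hi]
        simp [hi, Gm]
    rw [hpiece]
    refine (MultilinearMap.map_smul_univ _ (fun i => if i ∈ s then ff n F i else Xb n k i)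
      (fun i => (Gm n F s i : Fin (n + 1) → MvPolynomial (Unit ⊕ Fin (n + 1)) k))).trans ?_
    have hprod : (∏ i, if i ∈ s then ff n F i else Xb n k i)
        = (∏ i ∈ s, ff n F i) * ∏ i ∈ sᶜ, Xb n k i := by
      rw [Finset.prod_ite]
      congr 1
      · apply Finset.prod_congr _ fun _ _ => rfl
        ext; simp
      · apply Finset.prod_congr _ fun _ _ => rfl
        ext; simp
    rw [hprod]
    rfl
  have hTs : ∀ s : Finset (Fin (n + 1)),
      Ideal.Quotient.mk (JtildeIdeal n F)
        (Y0 n k ^ (n + 1) * (((∏ i ∈ s, ff n F i) * ∏ i ∈ sᶜ, Xb n k i) * (Gm n F s).det))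
      = Ideal.Quotient.mk (JtildeIdeal n F) (C (((m : k) - 1)⁻¹) ^ s.card * Tt n F ∅) := by
    intro s
    have h1 : Y0 n k ^ (n + 1) * (((∏ i ∈ s, ff n F i) * ∏ i ∈ sᶜ, Xb n k i) *
        (Gm n F s).det) = Tt n F s := by
      rw [Tt]; ring
    rw [h1]
    have h2 := quot_ind n F hm hhom s
    have h3 : Ideal.Quotient.mk (JtildeIdeal n F)
          (C (((m : k) - 1)⁻¹) ^ s.card * (C ((m : k) - 1) ^ s.card * Tt n F s))
        = Ideal.Quotient.mk (JtildeIdeal n F)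
          (C (((m : k) - 1)⁻¹) ^ s.card * Tt n F ∅) := by
      rw [_root_.map_mul, h2, ← _root_.map_mul]
    rw [show C (((m : k) - 1)⁻¹) ^ s.card * (C ((m : k) - 1) ^ s.card * Tt n F s)
        = ((C (((m : k) - 1)⁻¹) * C ((m : k) - 1)) ^ s.card) * Tt n F s by ring] at h3
    rw [← _root_.map_mul, inv_mul_cancel₀ hmk, map_one, one_pow, one_mul] at h3
    exact h3
  have hconst : (∑ s : Finset (Fin (n + 1)),
        (C (((m : k) - 1)⁻¹) : MvPolynomial (Unit ⊕ Fin (n + 1)) k) ^ s.card)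
      = C ((m : k) ^ (n + 1) * (((m : k) - 1)⁻¹) ^ (n + 1)) := by
    have h4 : ∀ s : Finset (Fin (n + 1)),
        (C (((m : k) - 1)⁻¹) : MvPolynomial (Unit ⊕ Fin (n + 1)) k) ^ s.card
        = (∏ _i ∈ s, C (((m : k) - 1)⁻¹)) *
          ∏ _i ∈ Finset.univ \ s, (1 : MvPolynomial (Unit ⊕ Fin (n + 1)) k) := by
      intro s; simp [Finset.prod_const]
    rw [← Finset.powerset_univ, Finset.sum_congr rfl fun s _ => h4 s, ← Finset.prod_add]
    have h5 : (C (((m : k) - 1)⁻¹) : MvPolynomial (Unit ⊕ Fin (n + 1)) k) + 1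
        = C ((m : k) * ((m : k) - 1)⁻¹) := by
      rw [show (m : k) * ((m : k) - 1)⁻¹ = ((m : k) - 1)⁻¹ + 1 by
        field_simp; ring]
      rw [map_add, map_one]
    rw [Finset.prod_const, h5, Finset.card_univ, Fintype.card_fin, ← map_pow, mul_pow]
  have hGm0 : ρ n k (hess n F).det = (Gm n F ∅).det := by
    rw [show (ρ n k) ((hess n F).det) = ((hess n F).map (ρ n k)).det from
      RingHom.map_det ((ρ n k : MvPolynomial (Fin (n + 1)) k →ₐ[k]
        MvPolynomial (Unit ⊕ Fin (n + 1)) k) :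
        MvPolynomial (Fin (n + 1)) k →+* MvPolynomial (Unit ⊕ Fin (n + 1)) k) (hess n F)]
    congr 1
  calc Ideal.Quotient.mk (JtildeIdeal n F) A.det
      = ∑ s : Finset (Fin (n + 1)), Ideal.Quotient.mk (JtildeIdeal n F)
          (Y0 n k ^ (n + 1) * (((∏ i ∈ s, ff n F i) * ∏ i ∈ sᶜ, Xb n k i) *
            (Gm n F s).det)) := by
        rw [hdetA, hdetB, Finset.mul_sum, map_sum]
    _ = ∑ s : Finset (Fin (n + 1)), Ideal.Quotient.mk (JtildeIdeal n F)
          (C (((m : k) - 1)⁻¹) ^ s.card * Tt n F ∅) := by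
        exact Finset.sum_congr rfl fun s _ => hTs s
    _ = Ideal.Quotient.mk (JtildeIdeal n F)
          ((∑ s : Finset (Fin (n + 1)), (C (((m : k) - 1)⁻¹) :
            MvPolynomial (Unit ⊕ Fin (n + 1)) k) ^ s.card) * Tt n F ∅) := by
        rw [Finset.sum_mul, map_sum]
    _ = Ideal.Quotient.mk (JtildeIdeal n F)
        (C ((m : k) ^ (n + 1) * (((m : k) - 1)⁻¹) ^ (n + 1)) * Y0 n k ^ (n + 1) *
          ρ n k (hess n F).det * ∏ i, Xb n k i) := by
        rw [hconst]
        congr 1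
        rw [Tt, hGm0]
        simp only [Finset.prod_empty, Finset.compl_empty]
        ring


end HessianRing
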